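/- In the satisfiability reduction game for W/BB-hedonic Nash stability: given a satisfiable CNF formula F = X₁ ∧ ... ∧ X_k over variables p₁,...,p_m with satisfying valuation v, the partition π = { {1} ∪ {literals true under v}, {0} ∪ {literals false under v}, {X₁,...,X_k} } is Nash stable (and individually rational) in the constructed BB-hedonic game. -/

import Mathlib

open Finset

/-- A partition of the player set into coalitions: `part i` is the coalition
containing player `i`. -/
structure HPartition (N : Type*) where
  part : N → Finset N
  mem_self : ∀ i, i ∈ part i
  eq_of_mem : ∀ i j : N, j ∈ part i → part j = part i

section Defs

variable {N : Type*} [DecidableEq N]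

/-- Strict part of a weak preference over coalitions. -/
def SPref (pref : N → Finset N → Finset N → Prop) (i : N) (S T : Finset N) : Prop :=
  pref i S T ∧ ¬ pref i T S

/-- `S` is an (existing or empty) coalition of the partition `π`. -/
def IsCoalitionOf (π : HPartition N) (S : Finset N) : Prop :=
  S = ∅ ∨ ∃ j, S = π.part j

/-- Nash stability: no player strictly prefers joining another existing
(possibly empty) coalition. -/
def NashStable (pref : N → Finset N → Finset N → Prop) (π : HPartition N) : Prop :=
  ∀ i S, IsCoalitionOf π S → S ≠ π.part i →
    ¬ SPref pref i (insert i S) (π.part i)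

/-- Individual stability: no strictly improving move that all members of the
joined coalition weakly approve. -/
def IndStable (pref : N → Finset N → Finset N → Prop) (π : HPartition N) : Prop :=
  ∀ i S, IsCoalitionOf π S → S ≠ π.part i →
    ¬ (SPref pref i (insert i S) (π.part i) ∧ ∀ j ∈ S, pref j (insert i S) S)

/-- Contractual individual stability: no strictly improving move approved by the
joined coalition and by the abandoned coalition. -/
def ContIndStable (pref : N → Finset N → Finset N → Prop) (π : HPartition N) : Prop :=
  ∀ i S, IsCoalitionOf π S → S ≠ π.part i →
    ¬ (SPref pref i (insert i S) (π.part i) ∧ (∀ j ∈ S, pref j (insert i S) S) ∧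
        (∀ j ∈ π.part i, j ≠ i → pref j ((π.part i).erase i) (π.part i)))

/-- Individual rationality: everyone weakly prefers his coalition to being alone. -/
def IndRational (pref : N → Finset N → Finset N → Prop) (π : HPartition N) : Prop :=
  ∀ i, pref i (π.part i) {i}

/-- A CIS deviation from `π` to `π'`: player `i` moves to the (possibly empty)
existing coalition `T`, strictly improving, while no member of `T` nor of the
abandoned coalition is worse off. -/
def CISDeviation (pref : N → Finset N → Finset N → Prop) (π π' : HPartition N) : Prop :=
  ∃ i T, IsCoalitionOf π T ∧ T ≠ π.part i ∧ i ∉ T ∧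
    SPref pref i (insert i T) (π.part i) ∧
    (∀ j ∈ T, pref j (insert i T) T) ∧
    (∀ j ∈ π.part i, j ≠ i → pref j ((π.part i).erase i) (π.part i)) ∧
    (∀ k, π'.part k = if k = i ∨ k ∈ T then insert i T else (π.part k).erase i)

/-- The weak relation associated with a (primitive) strict relation. -/
def weakOf (sp : N → Finset N → Finset N → Prop) (i : N) (S T : Finset N) : Prop :=
  ¬ sp i T S

/-- Strict part of a weak preference over players. -/
def strictP (p : N → N → N → Prop) (i j k : N) : Prop := p i j k ∧ ¬ p i k j

/-- Player `j` is unacceptable to `i`: `i ≻ᵢ j`. -/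
def unacc (p : N → N → N → Prop) (i j : N) : Prop := strictP p i i j

/-- Player `i` likes `j`: `j ≻ᵢ i`. -/
def likes (p : N → N → N → Prop) (i j : N) : Prop := strictP p i j i

/-- Each player's preference over players is a complete preorder. -/
def CompletePreorder (p : N → N → N → Prop) : Prop :=
  (∀ i j k, p i j k ∨ p i k j) ∧ (∀ i a b c, p i a b → p i b c → p i a c)

/-- The set of `≿ᵢ`-maximal elements of `J`, with `max ∅ = {i}`. -/
def maxSet (p : N → N → N → Prop) (i : N) (J : Finset N) : Set N :=
  if J = ∅ then {i} else {m | m ∈ J ∧ ∀ j ∈ J, p i m j}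

/-- The set of `≿ᵢ`-minimal elements of `J`, with `min ∅ = {i}`. -/
def minSet (p : N → N → N → Prop) (i : N) (J : Finset N) : Set N :=
  if J = ∅ then {i} else {m | m ∈ J ∧ ∀ j ∈ J, p i j m}

/-- W-hedonic (weak) preference over coalitions: compare worst members. -/
def WPref (p : N → N → N → Prop) (i : N) (S T : Finset N) : Prop :=
  ∀ s ∈ minSet p i (S.erase i), ∀ t ∈ minSet p i (T.erase i), p i s t

/-- WW-hedonic (weak) preference over coalitions. -/
def WWPref (p : N → N → N → Prop) (i : N) (S T : Finset N) : Prop :=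
  (∃ j ∈ T.erase i, unacc p i j) ∨ WPref p i S T

/-- BB-hedonic (weak) preference over coalitions. -/
def BBPref (p : N → N → N → Prop) (i : N) (S T : Finset N) : Prop :=
  (∃ j ∈ T.erase i, unacc p i j) ∨
    ((∀ j ∈ S.erase i, ¬ unacc p i j) ∧ (∀ j ∈ T.erase i, ¬ unacc p i j) ∧
      ∀ s ∈ maxSet p i (S.erase i), ∀ t ∈ maxSet p i (T.erase i), p i s t)

/-- B-hedonic strict preference over coalitions: better best member, or
indifferent best members and smaller size. -/
def BStrict (p : N → N → N → Prop) (i : N) (S T : Finset N) : Prop :=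
  (∀ s ∈ maxSet p i (S.erase i), ∀ t ∈ maxSet p i (T.erase i), strictP p i s t) ∨
    ((∀ s ∈ maxSet p i (S.erase i), ∀ t ∈ maxSet p i (T.erase i), p i s t ∧ p i t s) ∧
      S.card < T.card)

/-- B-hedonic weak preference over coalitions. -/
def BWeak (p : N → N → N → Prop) : N → Finset N → Finset N → Prop :=
  weakOf (BStrict p)

end Defs

/-- Players of the SAT reduction game: one player per clause, one player per
literal (a variable together with a sign), and the special players 0 and 1. -/
inductive SatPlayer (k m : ℕ) where
  | clause : Fin k → SatPlayer k m
  | lit : Fin m → Bool → SatPlayer k m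
  | zero : SatPlayer k m
  | one : SatPlayer k m
deriving DecidableEq, Fintype

/-- Utility encoding of the preferences of the reduction game, for a CNF
formula `F` (clause `X` is the set of literals `F X`).  The diagonal value is
each player's acceptability threshold. -/
def satU {k m : ℕ} (F : Fin k → Finset (Fin m × Bool)) :
    SatPlayer k m → SatPlayer k m → ℤ
  | .lit q b, y =>
      match y with
      | .zero => 3
      | .one => 3
      | .lit q' b' => if q' = q then (if b' = b then 1 else 0) else 2
      | .clause _ => 0
  | .clause X, y =>
      match y with
      | .one => 4
      | .lit q b => if (q, b) ∈ F X then 1 else 3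
      | .clause _ => 2
      | .zero => 1
  | .zero, y =>
      match y with
      | .one => 1
      | .clause _ => 1
      | _ => 2
  | .one, y =>
      match y with
      | .zero => 1
      | .clause _ => 1
      | _ => 2

/-- The induced (weak) preference of each player over players. -/
def satP {k m : ℕ} (F : Fin k → Finset (Fin m × Bool)) :
    SatPlayer k m → SatPlayer k m → SatPlayer k m → Prop :=
  fun i j l => satU F i l ≤ satU F i j

open Classical in
/-- The coalition of player 1 together with the literals true under `v`. -/
noncomputable def Tcoal (k m : ℕ) (v : Fin m → Bool) : Finset (SatPlayer k m) :=
  Finset.univ.filter fun x => x = .one ∨ ∃ q b, x = .lit q b ∧ v q = b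

open Classical in
/-- The coalition of player 0 together with the literals false under `v`. -/
noncomputable def Fcoal (k m : ℕ) (v : Fin m → Bool) : Finset (SatPlayer k m) :=
  Finset.univ.filter fun x => x = .zero ∨ ∃ q b, x = .lit q b ∧ v q ≠ b

open Classical in
/-- The coalition of all clause players. -/
noncomputable def Ccoal (k m : ℕ) : Finset (SatPlayer k m) :=
  Finset.univ.filter fun x => ∃ X, x = .clause X

namespace SatRed

variable {k m : ℕ}

noncomputable def pi0 (k m : ℕ) (v : Fin m → Bool) : SatPlayer k m → Finset (SatPlayer k m) :=
  fun x =>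
    if x ∈ Tcoal k m v then Tcoal k m v
    else if x ∈ Fcoal k m v then Fcoal k m v
    else Ccoal k m

lemma mem_T_iff (v : Fin m → Bool) (x : SatPlayer k m) :
    x ∈ Tcoal k m v ↔ (x = .one ∨ ∃ q b, x = .lit q b ∧ v q = b) := by
  simp [Tcoal]

lemma mem_F_iff (v : Fin m → Bool) (x : SatPlayer k m) :
    x ∈ Fcoal k m v ↔ (x = .zero ∨ ∃ q b, x = .lit q b ∧ v q ≠ b) := by
  simp [Fcoal]

lemma mem_C_iff (x : SatPlayer k m) :
    x ∈ Ccoal k m ↔ ∃ X, x = .clause X := by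
  simp [Ccoal]

lemma one_mem_T (v : Fin m → Bool) : (SatPlayer.one : SatPlayer k m) ∈ Tcoal k m v := by
  simp [mem_T_iff]

lemma zero_mem_F (v : Fin m → Bool) : (SatPlayer.zero : SatPlayer k m) ∈ Fcoal k m v := by
  simp [mem_F_iff]

lemma pi0_clause (v : Fin m → Bool) (X : Fin k) :
    pi0 k m v (.clause X) = Ccoal k m := by
  simp [pi0, mem_T_iff, mem_F_iff]

lemma pi0_one (v : Fin m → Bool) : pi0 k m v (.one : SatPlayer k m) = Tcoal k m v := by
  simp [pi0, mem_T_iff]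

lemma pi0_zero (v : Fin m → Bool) : pi0 k m v (.zero : SatPlayer k m) = Fcoal k m v := by
  simp [pi0, mem_T_iff, mem_F_iff]

lemma pi0_lit_true (v : Fin m → Bool) {q : Fin m} {b : Bool} (h : v q = b) :
    pi0 k m v (.lit q b) = Tcoal k m v := by
  simp [pi0, mem_T_iff, h]

lemma pi0_lit_false (v : Fin m → Bool) {q : Fin m} {b : Bool} (h : v q ≠ b) :
    pi0 k m v (.lit q b) = Fcoal k m v := by
  have h1 : (SatPlayer.lit q b : SatPlayer k m) ∉ Tcoal k m v := by
    intro hx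
    rcases (mem_T_iff v _).1 hx with h' | ⟨q', b', heq, hv'⟩
    · exact (by cases h')
    · cases heq; exact h hv'
  have h2 : (SatPlayer.lit q b : SatPlayer k m) ∈ Fcoal k m v := by
    rw [mem_F_iff]; exact Or.inr ⟨q, b, rfl, h⟩
  simp [pi0, h1, h2]

lemma unacc_iff (F : Fin k → Finset (Fin m × Bool)) (i j : SatPlayer k m) :
    unacc (satP F) i j ↔ satU F i j < satU F i i := by
  unfold unacc strictP satP
  omega

/-- A coalition with a member unacceptable to `i` is bad. -/
lemma pref_unacc (F : Fin k → Finset (Fin m × Bool)) (i : SatPlayer k m)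
    (A B : Finset (SatPlayer k m)) (j : SatPlayer k m) (hj : j ∈ B) (hne : j ≠ i)
    (hu : satU F i j < satU F i i) :
    BBPref (satP F) i A B :=
  Or.inl ⟨j, Finset.mem_erase.2 ⟨hne, hj⟩, (unacc_iff F i j).2 hu⟩

/-- If all of `i`'s partners are acceptable, `i` weakly prefers his coalition to
any coalition that is a singleton after inserting `i`. -/
lemma pref_self_coal (F : Fin k → Finset (Fin m × Bool)) (i : SatPlayer k m)
    (A B : Finset (SatPlayer k m)) (hB : B.erase i = ∅)
    (h : ∀ j ∈ A.erase i, satU F i i ≤ satU F i j) :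
    BBPref (satP F) i A B := by
  right
  refine ⟨?_, ?_, ?_⟩
  · intro j hj hu
    rw [unacc_iff] at hu
    exact absurd (h j hj) (not_le.2 hu)
  · intro j hj
    rw [hB] at hj
    exact absurd hj (Finset.notMem_empty j)
  · rw [hB]
    intro s hs t ht
    have ht' : t = i := by simpa [maxSet] using ht
    rw [ht']
    rcases Finset.eq_empty_or_nonempty (A.erase i) with hA | hA
    · have hs' : s = i := by simpa [maxSet, hA] using hs
      rw [hs']
      exact le_refl _
    · have hAne : A.erase i ≠ ∅ := hA.ne_empty
      rw [maxSet, if_neg hAne] at hs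
      exact h s hs.1

lemma h_self (F : Fin k → Finset (Fin m × Bool)) (v : Fin m → Bool) (i : SatPlayer k m) :
    ∀ j ∈ (pi0 k m v i).erase i, satU F i i ≤ satU F i j := by
  intro j hj
  rw [Finset.mem_erase] at hj
  obtain ⟨hji, hj⟩ := hj
  cases i with
  | clause X =>
      rw [pi0_clause, mem_C_iff] at hj
      obtain ⟨Y, rfl⟩ := hj
      simp [satU]
  | zero =>
      rw [pi0_zero, mem_F_iff] at hj
      rcases hj with rfl | ⟨q, b, rfl, _⟩
      · exact absurd rfl hji
      · simp [satU]
  | one =>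
      rw [pi0_one, mem_T_iff] at hj
      rcases hj with rfl | ⟨q, b, rfl, _⟩
      · exact absurd rfl hji
      · simp [satU]
  | lit q b =>
      by_cases hb : v q = b
      · rw [pi0_lit_true v hb, mem_T_iff] at hj
        rcases hj with rfl | ⟨q', b', rfl, hq'⟩
        · simp [satU]
        · by_cases hqq : q' = q
          · subst hqq
            have hbb : b' = b := by rw [← hq', hb]
            exact absurd (by rw [hbb]) hji
          · simp [satU, hqq]
      · rw [pi0_lit_false v hb, mem_F_iff] at hj
        rcases hj with rfl | ⟨q', b', rfl, hq'⟩
        · simp [satU]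
        · by_cases hqq : q' = q
          · subst hqq
            by_cases hbb : b' = b
            · subst hbb; exact absurd rfl hji
            · cases b <;> cases b' <;> simp_all
          · simp [satU, hqq]

lemma key_empty (F : Fin k → Finset (Fin m × Bool)) (v : Fin m → Bool) (i : SatPlayer k m) :
    BBPref (satP F) i (pi0 k m v i) (insert i (∅ : Finset (SatPlayer k m))) :=
  pref_self_coal F i _ _ (by simp) (h_self F v i)

lemma key_T (F : Fin k → Finset (Fin m × Bool)) (v : Fin m → Bool)
    (hv : ∀ X : Fin k, ∃ ℓ ∈ F X, v ℓ.1 = ℓ.2) (i : SatPlayer k m)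
    (hne : pi0 k m v i ≠ Tcoal k m v) :
    BBPref (satP F) i (pi0 k m v i) (insert i (Tcoal k m v)) := by
  cases i with
  | one => exact absurd (pi0_one v) hne
  | zero =>
      exact pref_unacc F _ _ _ .one (Finset.mem_insert_of_mem (one_mem_T v))
        (by simp) (by simp [satU])
  | clause X =>
      obtain ⟨ℓ, hℓF, hℓv⟩ := hv X
      refine pref_unacc F _ _ _ (.lit ℓ.1 ℓ.2)
        (Finset.mem_insert_of_mem ?_) (by simp) (by simp [satU, hℓF])
      rw [mem_T_iff]
      exact Or.inr ⟨ℓ.1, ℓ.2, rfl, hℓv⟩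
  | lit q b =>
      by_cases hb : v q = b
      · exact absurd (pi0_lit_true v hb) hne
      · refine pref_unacc F _ _ _ (.lit q (v q)) (Finset.mem_insert_of_mem ?_)
          (by simp [hb]) (by norm_num [satU, hb])
        rw [mem_T_iff]
        exact Or.inr ⟨q, v q, rfl, rfl⟩

lemma key_F (F : Fin k → Finset (Fin m × Bool)) (v : Fin m → Bool) (i : SatPlayer k m)
    (hne : pi0 k m v i ≠ Fcoal k m v) :
    BBPref (satP F) i (pi0 k m v i) (insert i (Fcoal k m v)) := by
  cases i with
  | zero => exact absurd (pi0_zero v) hne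
  | one =>
      exact pref_unacc F _ _ _ .zero (Finset.mem_insert_of_mem (zero_mem_F v))
        (by simp) (by simp [satU])
  | clause X =>
      exact pref_unacc F _ _ _ .zero (Finset.mem_insert_of_mem (zero_mem_F v))
        (by simp) (by simp [satU])
  | lit q b =>
      by_cases hb : v q = b
      · refine pref_unacc F _ _ _ (.lit q (!b)) (Finset.mem_insert_of_mem ?_)
          (by simp) (by simp [satU])
        rw [mem_F_iff]
        exact Or.inr ⟨q, !b, rfl, by simp [hb]⟩
      · exact absurd (pi0_lit_false v hb) hne

lemma key_C (F : Fin k → Finset (Fin m × Bool)) (v : Fin m → Bool) (i : SatPlayer k m)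
    (Y : Fin k) (hne : pi0 k m v i ≠ Ccoal k m) :
    BBPref (satP F) i (pi0 k m v i) (insert i (Ccoal k m)) := by
  have hYC : (SatPlayer.clause Y : SatPlayer k m) ∈ Ccoal k m := by
    rw [mem_C_iff]; exact ⟨Y, rfl⟩
  cases i with
  | clause X => exact absurd (pi0_clause v X) hne
  | zero =>
      exact pref_unacc F _ _ _ (.clause Y) (Finset.mem_insert_of_mem hYC)
        (by simp) (by simp [satU])
  | one =>
      exact pref_unacc F _ _ _ (.clause Y) (Finset.mem_insert_of_mem hYC)
        (by simp) (by simp [satU])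
  | lit q b =>
      exact pref_unacc F _ _ _ (.clause Y) (Finset.mem_insert_of_mem hYC)
        (by simp) (by simp [satU])

lemma mem_pi0_self (v : Fin m → Bool) (x : SatPlayer k m) : x ∈ pi0 k m v x := by
  cases x with
  | clause X => rw [pi0_clause, mem_C_iff]; exact ⟨X, rfl⟩
  | one => rw [pi0_one]; exact one_mem_T v
  | zero => rw [pi0_zero]; exact zero_mem_F v
  | lit q b =>
      by_cases hb : v q = b
      · rw [pi0_lit_true v hb, mem_T_iff]; exact Or.inr ⟨q, b, rfl, hb⟩
      · rw [pi0_lit_false v hb, mem_F_iff]; exact Or.inr ⟨q, b, rfl, hb⟩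

lemma pi0_eq_of_mem (v : Fin m → Bool) (i j : SatPlayer k m) (hj : j ∈ pi0 k m v i) :
    pi0 k m v j = pi0 k m v i := by
  have hT : ∀ x : SatPlayer k m, x ∈ Tcoal k m v → pi0 k m v x = Tcoal k m v := by
    intro x hx; simp [pi0, hx]
  have hF : ∀ x : SatPlayer k m, x ∈ Fcoal k m v → pi0 k m v x = Fcoal k m v := by
    intro x hx
    have hxT : x ∉ Tcoal k m v := by
      intro hxT
      rw [mem_F_iff] at hx
      rw [mem_T_iff] at hxT
      rcases hx with rfl | ⟨q, b, rfl, hq⟩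
      · rcases hxT with h' | ⟨q, b, h', _⟩ <;> exact (by cases h')
      · rcases hxT with h' | ⟨q', b', heq, hv'⟩
        · exact (by cases h')
        · cases heq; exact hq hv'
    simp [pi0, hx, hxT]
  have hC : ∀ x : SatPlayer k m, x ∈ Ccoal k m → pi0 k m v x = Ccoal k m := by
    intro x hx
    rw [mem_C_iff] at hx
    obtain ⟨X, rfl⟩ := hx
    exact pi0_clause v X
  unfold pi0 at hj
  by_cases h1 : i ∈ Tcoal k m v
  · rw [if_pos h1] at hj
    rw [hT j hj]
    simp only [pi0]
    rw [if_pos h1]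
  · rw [if_neg h1] at hj
    by_cases h2 : i ∈ Fcoal k m v
    · rw [if_pos h2] at hj
      rw [hF j hj]
      simp only [pi0]
      rw [if_neg h1, if_pos h2]
    · rw [if_neg h2] at hj
      rw [hC j hj]
      simp only [pi0]
      rw [if_neg h1, if_neg h2]

end SatRed

namespace SatRed

lemma key {k m : ℕ} (F : Fin k → Finset (Fin m × Bool)) (v : Fin m → Bool)
    (hv : ∀ X : Fin k, ∃ ℓ ∈ F X, v ℓ.1 = ℓ.2) (i j : SatPlayer k m)
    (hne : pi0 k m v j ≠ pi0 k m v i) :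
    BBPref (satP F) i (pi0 k m v i) (insert i (pi0 k m v j)) := by
  cases j with
  | clause Y =>
      rw [pi0_clause]
      exact key_C F v i Y (fun h => hne (by rw [pi0_clause, h]))
  | one =>
      rw [pi0_one]
      exact key_T F v hv i (fun h => hne (by rw [pi0_one, h]))
  | zero =>
      rw [pi0_zero]
      exact key_F F v i (fun h => hne (by rw [pi0_zero, h]))
  | lit q b =>
      by_cases hb : v q = b
      · rw [pi0_lit_true v hb]
        exact key_T F v hv i (fun h => hne (by rw [pi0_lit_true v hb, h]))
      · rw [pi0_lit_false v hb]
        exact key_F F v i (fun h => hne (by rw [pi0_lit_false v hb, h]))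

lemma key_ir {k m : ℕ} (F : Fin k → Finset (Fin m × Bool)) (v : Fin m → Bool)
    (i : SatPlayer k m) : BBPref (satP F) i (pi0 k m v i) {i} :=
  pref_self_coal F i _ _ (Finset.erase_singleton i) (h_self F v i)

end SatRed

/-- if the valuation `v` satisfies the CNF formula `F`, then the
partition `{ {1} ∪ true literals, {0} ∪ false literals, all clauses }` is Nash
stable and individually rational in the constructed BB-hedonic game. -/
theorem sat_reduction_ns {k m : ℕ} (F : Fin k → Finset (Fin m × Bool))
    (v : Fin m → Bool) (hv : ∀ X : Fin k, ∃ ℓ ∈ F X, v ℓ.1 = ℓ.2) :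
    ∃ π : HPartition (SatPlayer k m),
      (∀ x, π.part x =
        if x ∈ Tcoal k m v then Tcoal k m v
        else if x ∈ Fcoal k m v then Fcoal k m v
        else Ccoal k m) ∧
      NashStable (BBPref (satP F)) π ∧ IndRational (BBPref (satP F)) π := by
  classical
  refine ⟨⟨SatRed.pi0 k m v, SatRed.mem_pi0_self v,
      fun i j => SatRed.pi0_eq_of_mem v i j⟩, fun x => rfl, ?_, ?_⟩
  · intro i S hS hne hdev
    apply hdev.2
    rcases hS with rfl | ⟨j, rfl⟩
    · exact SatRed.key_empty F v i
    · exact SatRed.key F v hv i j hne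
  · intro i
    exact SatRed.key_ir F v i
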